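/- Let n ≥ 3 and let M : Fin n → Fin n → Bool be an absorbing state of the binary trust gossip model. If an agent i has at least one outgoing one-way trust relation (i ▷ j for some j), then i receives no trust from any agent at all: for every agent k ≠ i, M k i = false. -/
import Mathlib

/-- A state `M` is absorbing if for all pairwise distinct agents `a z y`,
if `z` trusts `a` then `z` already agrees with `a` about `y`. -/
def Absorbing {n : ℕ} (M : Fin n → Fin n → Bool) : Prop :=
  ∀ a z y : Fin n, a ≠ z → a ≠ y → z ≠ y → M z a = true → M z y = M a y

/-- In an absorbing state, a peripheral agent (one with an outgoing one-way
trust relation) receives no trust from any other agent. -/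
theorem peripheral_receives_no_trust {n : ℕ} (hn : 3 ≤ n) (M : Fin n → Fin n → Bool)
    (hdiag : ∀ i, M i i = false) (habs : Absorbing M)
    (i j : Fin n) (hij : i ≠ j)
    (hout : M i j = true ∧ M j i = false) :
    ∀ k : Fin n, k ≠ i → M k i = false := by
  intro k hki
  by_contra h
  have hki' : M k i = true := by
    cases hMki : M k i with
    | false => exact absurd hMki h
    | true => rfl
  by_cases hkj : k = j
  · subst hkj; exact absurd hki' (by simp [hout.2])
  · have h1 : M k j = M i j :=
      habs i k j (Ne.symm hki) hij (hkj ∘ (by exact fun h => h)) hki'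
    have hkj' : M k j = true := h1.trans hout.1
    have h2 : M k i = M j i :=
      habs j k i (Ne.symm hkj) (Ne.symm hij) hki hkj'
    rw [hout.2] at h2
    exact absurd (hki'.symm.trans h2) (by simp)
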